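/- Let (L,G) be a generator enriched lattice and θ : B_{|G|} → L the canonical strong surjection sending X ⊆ [n] to the join of the generators indexed by X. Then (L,G) has no parallels if and only if for every ℓ ∈ L the fiber θ⁻¹(ℓ) has a unique minimal element in the Boolean algebra B_{|G|}. -/
import Mathlib


open Finset

/-- A generator-enriched lattice datum inside an ambient lattice `L`:
a minimal element `z` together with a finite generating set of elements
strictly above `z`. The underlying set of elements consists of all joins
of `z` with subsets of the generating set. -/
structure GEL (L : Type*) [Lattice L] [DecidableEq L] where
  z : L
  gens : Finset L
  lt_gens : ∀ g ∈ gens, z < g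

namespace GEL

variable {L K : Type*} [Lattice L] [OrderBot L] [DecidableEq L]

/-- The underlying set of elements of a generator enriched lattice. -/
def carrier (M : GEL L) : Finset L :=
  M.gens.powerset.image fun X => X.sup id ⊔ M.z

/-- Deletion of a set of generators. -/
def delete (M : GEL L) (I : Finset L) : GEL L :=
  ⟨M.z, M.gens \ I, fun g hg => M.lt_gens g (Finset.mem_sdiff.mp hg).1⟩

/-- Restriction to a set of generators. -/
def restrict (M : GEL L) (I : Finset L) : GEL L :=
  M.delete (M.gens \ I)

/-- Contraction by a set of generators. -/
def contract (M : GEL L) (I : Finset L) : GEL L :=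
  ⟨I.sup id ⊔ M.z,
   (M.gens.image fun g => g ⊔ (I.sup id ⊔ M.z)).erase (I.sup id ⊔ M.z),
   fun g hg => by
     obtain ⟨hne, hg'⟩ := Finset.mem_erase.mp hg
     obtain ⟨h, -, rfl⟩ := Finset.mem_image.mp hg'
     exact lt_of_le_of_ne le_sup_right (Ne.symm hne)⟩

open Classical in
/-- Contraction by an element: contract by all generators below it. -/
noncomputable def contractEl (M : GEL L) (ℓ : L) : GEL L :=
  M.contract (M.gens.filter fun g => g ≤ ℓ)

/-- A single deletion or contraction step. -/
def Step (M N : GEL L) : Prop :=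
  ∃ I ⊆ M.gens, N = M.delete I ∨ N = M.contract I

/-- `Minor M N` : `N` is a minor of `M`, i.e. obtained from `M` by a finite
sequence of deletions and contractions. -/
def Minor (M N : GEL L) : Prop :=
  Relation.ReflTransGen Step M N

/-- The generator enriched lattice on a lattice with `⊥`, with the given generating set. -/
def ofGens (G : Finset L) (hG : ∀ g ∈ G, (⊥ : L) < g) : GEL L :=
  ⟨⊥, G, hG⟩

/-- The underlying type of the minor poset of `T`: all minors of `T`
together with an adjoined minimum `none`. -/
abbrev MP (T : GEL L) := Option {M : GEL L // T.Minor M}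

/-- The order relation of the minor poset. -/
def mple (T : GEL L) : MP T → MP T → Prop
  | none, _ => True
  | some _, none => False
  | some A, some B => B.1.Minor A.1

/-- The rank function of the minor poset. -/
def mrank (T : GEL L) : MP T → ℕ
  | none => 0
  | some A => A.1.gens.card + 1

/-- A parallel: an element `ℓ` and distinct generators `g, h` with
`g ⊔ ℓ = h ⊔ ℓ ≠ ℓ`. -/
def HasParallel (M : GEL L) : Prop :=
  ∃ ℓ ∈ M.carrier, ∃ g ∈ M.gens, ∃ h ∈ M.gens,
    g ≠ h ∧ g ⊔ ℓ = h ⊔ ℓ ∧ g ⊔ ℓ ≠ ℓ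

/-- Isomorphism of generator enriched lattices: a join-preserving bijection of the
underlying sets carrying the generating set onto the generating set. -/
def GIso [Lattice K] [OrderBot K] [DecidableEq K] (M : GEL L) (N : GEL K) : Prop :=
  ∃ f : L → K, Set.BijOn f ↑M.carrier ↑N.carrier ∧
    (∀ a ∈ M.carrier, ∀ b ∈ M.carrier, f (a ⊔ b) = f a ⊔ f b) ∧
    f '' ↑M.gens = ↑N.gens

open Classical in
/-- The image generator enriched lattice `⟨f(I) | f(z)⟩` of a strong map. -/
noncomputable def map [Lattice K] [DecidableEq K] (f : L → K) (M : GEL L) : GEL K :=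
  ⟨f M.z, (M.gens.image f).filter fun y => f M.z < y,
   fun g hg => (Finset.mem_filter.mp hg).2⟩

/-- `T` lifts join irreducibles: for every `ℓ` and generator `g` with `g ≰ ℓ`,
the element `g ⊔ ℓ` is join irreducible in the interval `[ℓ, ⊤]`. -/
def LiftsJI (T : GEL L) : Prop :=
  ∀ ℓ : L, ∀ g ∈ T.gens, ¬ g ≤ ℓ →
    ∀ a b : L, ℓ ≤ a → ℓ ≤ b → g ⊔ ℓ = a ⊔ b → g ⊔ ℓ = a ∨ g ⊔ ℓ = b

end GEL

section Aux

variable {L : Type*} [Lattice L] [OrderBot L] [DecidableEq L]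

/-- Key lemma: with no parallels, if `sup Y ⊔ ℓ' = g ⊔ ℓ' ≠ ℓ'` then `g ∈ Y`. -/
lemma GEL.lemA (T : GEL L)
    (hNP : ∀ ℓ' : L, ∀ g ∈ T.gens, ∀ h ∈ T.gens, g ⊔ ℓ' = h ⊔ ℓ' → g ⊔ ℓ' ≠ ℓ' → g = h) :
    ∀ Y : Finset L, Y ⊆ T.gens → ∀ ℓ' g, g ∈ T.gens →
      Y.sup id ⊔ ℓ' = g ⊔ ℓ' → g ⊔ ℓ' ≠ ℓ' → g ∈ Y := by
  intro Y
  induction Y using Finset.strongInductionOn with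
  | _ Y IH =>
    intro hYG ℓ' g hg hsup hne
    rcases Y.eq_empty_or_nonempty with rfl | ⟨h, hh⟩
    · simp only [Finset.sup_empty, bot_sup_eq] at hsup
      exact absurd hsup.symm hne
    · set ℓ'' := (Y.erase h).sup id ⊔ ℓ' with hl''
      have hins : insert h (Y.erase h) = Y := Finset.insert_erase hh
      have hYsup : Y.sup id = h ⊔ (Y.erase h).sup id := by
        conv_lhs => rw [← hins]
        rw [Finset.sup_insert]; rfl
      have hsplit : ℓ'' ⊔ h = g ⊔ ℓ' := by
        rw [hl'', ← hsup, hYsup]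
        ac_rfl
      have hle : ℓ'' ≤ g ⊔ ℓ' := by
        rw [← hsplit]; exact le_sup_left
      have hgll : g ⊔ ℓ'' = g ⊔ ℓ' := by
        apply le_antisymm
        · exact sup_le (le_sup_left) hle
        · exact sup_le le_sup_left (le_trans (le_sup_right : ℓ' ≤ ℓ'') le_sup_right)
      by_cases hcase : h ⊔ ℓ'' = ℓ''
      · have : (Y.erase h).sup id ⊔ ℓ' = g ⊔ ℓ' := by
          have : ℓ'' = g ⊔ ℓ' := by
            rw [← hsplit, sup_comm ℓ'' h, hcase]
          simpa [hl''] using this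
        have := IH (Y.erase h) (Finset.erase_ssubset hh)
          (fun x hx => hYG (Finset.mem_of_mem_erase hx)) ℓ' g hg this hne
        exact Finset.mem_of_mem_erase this
      · have hheq : g ⊔ ℓ'' = h ⊔ ℓ'' := by
          rw [hgll, ← hsplit, sup_comm ℓ'' h]
        have hne'' : g ⊔ ℓ'' ≠ ℓ'' := by rw [hheq]; exact hcase
        have := hNP ℓ'' g hg h (hYG hh) hheq hne''
        exact this ▸ hh

/-- Fibers are closed under intersection when there are no parallels. -/
lemma GEL.lemB (T : GEL L)
    (hNP : ∀ ℓ' : L, ∀ g ∈ T.gens, ∀ h ∈ T.gens, g ⊔ ℓ' = h ⊔ ℓ' → g ⊔ ℓ' ≠ ℓ' → g = h) :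
    ∀ Y₁ : Finset L, Y₁ ⊆ T.gens → ∀ Y₂ : Finset L, Y₂ ⊆ T.gens → ∀ ℓ : L,
      Y₁.sup id = ℓ → Y₂.sup id = ℓ → (Y₁ ∩ Y₂).sup id = ℓ := by
  intro Y₁
  induction Y₁ using Finset.strongInductionOn with
  | _ Y₁ IH =>
    intro h1G Y₂ h2G ℓ hs1 hs2
    by_cases hsub : Y₁ ⊆ Y₂
    · rwa [Finset.inter_eq_left.mpr hsub]
    · obtain ⟨g, hgY1, hgY2⟩ := Finset.not_subset.mp hsub
      set ℓ' := (Y₁.erase g).sup id with hl'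
      have hins : insert g (Y₁.erase g) = Y₁ := Finset.insert_erase hgY1
      have hgl : g ⊔ ℓ' = ℓ := by
        rw [hl', ← hs1]
        conv_rhs => rw [← hins]
        rw [Finset.sup_insert]; rfl
      by_cases hcase : ℓ' = ℓ
      · have hinter : (Y₁.erase g) ∩ Y₂ = Y₁ ∩ Y₂ := by
          ext x
          simp only [Finset.mem_inter, Finset.mem_erase]
          constructor
          · rintro ⟨⟨-, hx1⟩, hx2⟩; exact ⟨hx1, hx2⟩
          · rintro ⟨hx1, hx2⟩
            exact ⟨⟨fun h => hgY2 (h ▸ hx2), hx1⟩, hx2⟩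
        have := IH (Y₁.erase g) (Finset.erase_ssubset hgY1)
          (fun x hx => h1G (Finset.mem_of_mem_erase hx)) Y₂ h2G ℓ hcase hs2
        rwa [hinter] at this
      · exfalso
        have hle : ℓ' ≤ ℓ := by rw [← hgl]; exact le_sup_right
        have hne : g ⊔ ℓ' ≠ ℓ' := by
          rw [hgl]; exact fun h => hcase h.symm
        have hsup2 : Y₂.sup id ⊔ ℓ' = g ⊔ ℓ' := by
          rw [hs2, hgl, sup_eq_left.mpr hle]
        exact hgY2 (T.lemA hNP Y₂ h2G ℓ' g (h1G hgY1) hsup2 hne)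

end Aux

/-- `(L,G)` has no parallels iff every fiber of the canonical strong map
`θ : B_{|G|} → L`, `θ(X) = ⋁_{g ∈ X} g`, has a unique minimal element. -/
theorem noParallels_iff_unique_min_fiber {L : Type*} [Lattice L] [OrderBot L]
    [DecidableEq L] (T : GEL L) (hcar : ∀ ℓ : L, ℓ ∈ T.carrier) :
    ¬ T.HasParallel ↔
      ∀ ℓ : L, ∃ X : Finset {g : L // g ∈ T.gens},
        (X.image Subtype.val).sup id = ℓ ∧
        ∀ Y : Finset {g : L // g ∈ T.gens},
          (Y.image Subtype.val).sup id = ℓ → X ⊆ Y := by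
  classical
  -- First: z = ⊥ and every element is a join of a subset of generators.
  have hz : T.z = ⊥ := by
    obtain ⟨S, hS, hSeq⟩ := Finset.mem_image.mp (hcar ⊥)
    have : T.z ≤ ⊥ := hSeq ▸ le_sup_right
    exact le_bot_iff.mp this
  have hmem : ∀ ℓ : L, ∃ S : Finset L, S ⊆ T.gens ∧ S.sup id = ℓ := by
    intro ℓ
    obtain ⟨S, hS, hSeq⟩ := Finset.mem_image.mp (hcar ℓ)
    exact ⟨S, Finset.mem_powerset.mp hS, by rw [← hSeq, hz, sup_bot_eq]⟩
  constructor
  · intro hP ℓ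
    have hNP : ∀ ℓ' : L, ∀ g ∈ T.gens, ∀ h ∈ T.gens,
        g ⊔ ℓ' = h ⊔ ℓ' → g ⊔ ℓ' ≠ ℓ' → g = h := by
      intro ℓ' g hg h hh heq hne
      by_contra hgh
      exact hP ⟨ℓ', hcar ℓ', g, hg, h, hh, hgh, heq, hne⟩
    -- the set of fibers
    set F : Finset (Finset L) :=
      T.gens.powerset.filter (fun S => S.sup id = ℓ) with hF
    obtain ⟨S₀, hS₀G, hS₀⟩ := hmem ℓ
    have hS₀F : S₀ ∈ F := by
      rw [hF, Finset.mem_filter, Finset.mem_powerset]; exact ⟨hS₀G, hS₀⟩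
    have hFne : F.Nonempty := ⟨S₀, hS₀F⟩
    set X : Finset L := F.inf' hFne id with hX
    have hXmem : X ∈ {S : Finset L | S ⊆ T.gens ∧ S.sup id = ℓ} := by
      apply Finset.inf'_mem {S : Finset L | S ⊆ T.gens ∧ S.sup id = ℓ}
      · rintro x ⟨hx1, hx2⟩ y ⟨hy1, hy2⟩
        exact ⟨fun a ha => hx1 (Finset.mem_of_mem_inter_left ha),
          T.lemB hNP x hx1 y hy1 ℓ hx2 hy2⟩
      · intro S hS
        rw [hF, Finset.mem_filter, Finset.mem_powerset] at hS
        exact hS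
    obtain ⟨hXG, hXsup⟩ := hXmem
    have hXle : ∀ S ∈ F, X ⊆ S := fun S hS => Finset.inf'_le id hS
    refine ⟨X.subtype (· ∈ T.gens), ?_, ?_⟩
    · have himg : (X.subtype (· ∈ T.gens)).image Subtype.val = X := by
        ext a
        simp only [Finset.mem_image, Finset.mem_subtype]
        constructor
        · rintro ⟨⟨b, hb⟩, hbX, rfl⟩; exact hbX
        · intro ha; exact ⟨⟨a, hXG ha⟩, ha, rfl⟩
      rw [himg]; exact hXsup
    · intro Y hY
      have hYG : Y.image Subtype.val ⊆ T.gens := by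
        intro a ha
        obtain ⟨b, hb, rfl⟩ := Finset.mem_image.mp ha
        exact b.2
      have hYF : Y.image Subtype.val ∈ F := by
        rw [hF, Finset.mem_filter, Finset.mem_powerset]; exact ⟨hYG, hY⟩
      have hXY : X ⊆ Y.image Subtype.val := hXle _ hYF
      intro a ha
      rw [Finset.mem_subtype] at ha
      obtain ⟨b, hb, hba⟩ := Finset.mem_image.mp (hXY ha)
      have : b = a := Subtype.ext hba
      exact this ▸ hb
  · rintro hmin ⟨ℓ, hℓ, g, hg, h, hh, hgh, heq, hne⟩
    obtain ⟨S, hSG, hSsup⟩ := hmem ℓ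
    obtain ⟨X, hXsup, hXmin⟩ := hmin (g ⊔ ℓ)
    -- build fibers for g ⊔ ℓ
    have mkfib : ∀ k (hk : k ∈ T.gens), k ⊔ ℓ = g ⊔ ℓ →
        ∃ Y : Finset {x : L // x ∈ T.gens},
          (Y.image Subtype.val) = insert k S ∧ (Y.image Subtype.val).sup id = g ⊔ ℓ := by
      intro k hk hkeq
      have hins : insert k S ⊆ T.gens := Finset.insert_subset hk hSG
      have himg : ((insert k S).subtype (· ∈ T.gens)).image Subtype.val = insert k S := by
        ext a
        simp only [Finset.mem_image, Finset.mem_subtype]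
        constructor
        · rintro ⟨⟨b, hb⟩, hbX, rfl⟩; exact hbX
        · intro ha; exact ⟨⟨a, hins ha⟩, ha, rfl⟩
      refine ⟨(insert k S).subtype (· ∈ T.gens), himg, ?_⟩
      rw [himg, Finset.sup_insert, hSsup]
      exact hkeq
    obtain ⟨Y₁, hY₁img, hY₁sup⟩ := mkfib g hg rfl
    obtain ⟨Y₂, hY₂img, hY₂sup⟩ := mkfib h hh heq.symm
    have hX1 : X ⊆ Y₁ := hXmin Y₁ hY₁sup
    have hX2 : X ⊆ Y₂ := hXmin Y₂ hY₂sup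
    have hXS : X.image Subtype.val ⊆ S := by
      intro a ha
      have h1 : a ∈ insert g S := hY₁img ▸ Finset.image_subset_image hX1 ha
      have h2 : a ∈ insert h S := hY₂img ▸ Finset.image_subset_image hX2 ha
      rcases Finset.mem_insert.mp h1 with rfl | hS1
      · rcases Finset.mem_insert.mp h2 with h' | hS2
        · exact absurd h' hgh
        · exact hS2
      · exact hS1
    have : g ⊔ ℓ ≤ ℓ := by
      rw [← hXsup, ← hSsup]
      exact Finset.sup_mono hXS
    exact hne (le_antisymm this le_sup_right)
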